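/- If prev(T[i..j]) is represented by PPH(T) (i.e., spelled by some root-to-node path), then for every substring X = T[i'..j'] with i ≤ i' ≤ j' ≤ j, prev(X) is represented by PPH(T). -/

import Mathlib

open List

variable {α : Type} [DecidableEq α]

/-- The previous encoding entry at (0-based) position `i` of a p-string `S`,
over static alphabet `Sig`. -/
def prevEncAt (Sig : Set α) [DecidablePred (· ∈ Sig)] (S : List α) (i : ℕ) : α ⊕ ℕ :=
  match S[i]? with
  | none => Sum.inr 0
  | some c =>
    if c ∈ Sig then Sum.inl c
    else if (List.range i).any (fun j => decide (S[j]? = some c)) then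
      Sum.inr (i - Nat.findGreatest (fun j => S[j]? = some c) (i - 1))
    else Sum.inr 0

/-- The previous encoding of a p-string `S`. -/
def prevEnc (Sig : Set α) [DecidablePred (· ∈ Sig)] (S : List α) : List (α ⊕ ℕ) :=
  (List.range S.length).map (prevEncAt Sig S)

/-- Two p-strings parameterized match: equal length and a bijection on characters
fixing the static alphabet pointwise maps one onto the other. -/
def PMatch (Sig : Set α) (X Y : List α) : Prop :=
  X.length = Y.length ∧ ∃ f : α ≃ α, (∀ a ∈ Sig, f a = a) ∧ X.map f = Y

/-- Length of the shortest prefix of `S` not yet a node of `N`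
(defaults to `S.length` if all prefixes are nodes). -/
def insLen {β : Type} [DecidableEq β] (N : Finset (List β)) (S : List β) : ℕ :=
  (((List.range (S.length + 1)).filter (fun m => decide (S.take m ∉ N))).head?).getD S.length

/-- The node set of the sequence hash tree of a sequence of strings,
built incrementally: each step inserts the shortest prefix of the current
string that is not yet a node. -/
def SHTNodes {β : Type} [DecidableEq β] (L : List (List β)) : Finset (List β) :=
  L.foldl (fun N S => insert (S.take (insLen N S)) N) ∅

/-- The sequence ⟨ε, prev(T[n..]), ..., prev(T[1..])⟩ of previous-encoded
suffixes of `T` in increasing length order. -/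
def pphSeq (Sig : Set α) [DecidablePred (· ∈ Sig)] (T : List α) : List (List (α ⊕ ℕ)) :=
  [] :: (List.range T.length).map (fun k => prevEnc Sig (T.drop (T.length - 1 - k)))

/-- The node set of the parameterized position heap `PPH(T)`. -/
def pphNodes (Sig : Set α) [DecidablePred (· ∈ Sig)] (T : List α) : Finset (List (α ⊕ ℕ)) :=
  SHTNodes (pphSeq Sig T)

/-- `a ∈ Σ ∪ {0}` as a character of a previous encoding. -/
def StaticOrZero (Sig : Set α) (a : α ⊕ ℕ) : Prop :=
  (∃ c ∈ Sig, a = Sum.inl c) ∨ a = Sum.inr 0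

/-- Reversed suffix link `rslink(a, v) = u` in a position heap with node set `N`
for a text of length `n`. -/
def RSLink (Sig : Set α) (n : ℕ) (N : Finset (List (α ⊕ ℕ)))
    (a : α ⊕ ℕ) (v u : List (α ⊕ ℕ)) : Prop :=
  v ∈ N ∧ u ∈ N ∧
    ((StaticOrZero Sig a ∧ u = a :: v) ∨
     (∃ d : ℕ, a = Sum.inr d ∧ 1 ≤ d ∧ d ≤ n - 1 ∧ v[d - 1]? = some (Sum.inr 0) ∧
       u = Sum.inr 0 :: (v.take (d - 1) ++ [Sum.inr d] ++ v.drop d)))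

-- auxiliary development

def ptailF (w : List (α ⊕ ℕ)) (q : ℕ) : α ⊕ ℕ :=
  match w[q+1]? with
  | some (Sum.inr d) => if d = q+1 then Sum.inr 0 else Sum.inr d
  | some (Sum.inl c) => Sum.inl c
  | none => Sum.inr 0

def ptail (w : List (α ⊕ ℕ)) : List (α ⊕ ℕ) :=
  (List.range (w.length - 1)).map (ptailF w)

lemma ptail_take (w : List (α ⊕ ℕ)) (m : ℕ) : ptail (w.take m) = (ptail w).take (m-1) := by
  unfold ptail
  rw [← List.map_take, List.take_range, List.length_take]
  have h : (min m w.length) - 1 = min (m-1) (w.length - 1) := by omega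
  rw [h]
  apply List.map_congr_left
  intro q hq
  rw [List.mem_range] at hq
  unfold ptailF
  rw [List.getElem?_take, if_pos (by omega)]

lemma prevEncAt_eq (Sig : Set α) [DecidablePred (· ∈ Sig)] (S : List α) (i : ℕ) (c : α)
    (hc : S[i]? = some c) :
    prevEncAt Sig S i = if c ∈ Sig then Sum.inl c
      else if (List.range i).any (fun j => decide (S[j]? = some c)) then
        Sum.inr (i - Nat.findGreatest (fun j => S[j]? = some c) (i - 1))
      else Sum.inr 0 := by
  unfold prevEncAt
  rw [hc]

lemma findGreatest_congr {P Q : ℕ → Prop} [DecidablePred P] [DecidablePred Q] {b : ℕ}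
    (h : ∀ j ≤ b, (P j ↔ Q j)) : Nat.findGreatest P b = Nat.findGreatest Q b := by
  induction b with
  | zero => rfl
  | succ n ih =>
    rw [Nat.findGreatest_succ, Nat.findGreatest_succ]
    by_cases hp : P (n+1)
    · rw [if_pos hp, if_pos ((h _ le_rfl).1 hp)]
    · rw [if_neg hp, if_neg (fun hq => hp ((h _ le_rfl).2 hq)),
        ih (fun j hj => h j (Nat.le_succ_of_le hj))]

lemma length_prevEnc (Sig : Set α) [DecidablePred (· ∈ Sig)] (S : List α) :
    (prevEnc Sig S).length = S.length := by simp [prevEnc]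

lemma prevEncAt_take (Sig : Set α) [DecidablePred (· ∈ Sig)] (S : List α) {m q : ℕ}
    (hq : q < m) : prevEncAt Sig (S.take m) q = prevEncAt Sig S q := by
  unfold prevEncAt
  rw [List.getElem?_take, if_pos hq]
  cases hc : S[q]? with
  | none => rfl
  | some c =>
    by_cases hcs : c ∈ Sig
    · simp [hcs]
    · simp only [hcs, if_false]
      have hany : ((List.range q).any (fun j => decide ((S.take m)[j]? = some c)))
          = ((List.range q).any (fun j => decide (S[j]? = some c))) := by
        rw [Bool.eq_iff_iff]
        simp only [List.any_eq_true, List.mem_range, decide_eq_true_eq]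
        constructor
        · rintro ⟨j, hj, hje⟩
          rw [List.getElem?_take, if_pos (by omega)] at hje
          exact ⟨j, hj, hje⟩
        · rintro ⟨j, hj, hje⟩
          exact ⟨j, hj, by rw [List.getElem?_take, if_pos (by omega)]; exact hje⟩
      have hfg : Nat.findGreatest (fun j => (S.take m)[j]? = some c) (q-1)
          = Nat.findGreatest (fun j => S[j]? = some c) (q-1) := by
        apply findGreatest_congr
        intro j hj
        rw [List.getElem?_take, if_pos (by omega)]
      rw [hany, hfg]

lemma prevEnc_take (Sig : Set α) [DecidablePred (· ∈ Sig)] (S : List α) (m : ℕ) :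
    prevEnc Sig (S.take m) = (prevEnc Sig S).take m := by
  unfold prevEnc
  rw [← List.map_take, List.take_range, List.length_take]
  apply List.map_congr_left
  intro q hq
  rw [List.mem_range] at hq
  exact prevEncAt_take Sig S (lt_of_lt_of_le hq (min_le_left _ _))

lemma ptail_prevEnc (Sig : Set α) [DecidablePred (· ∈ Sig)] (S : List α) :
    ptail (prevEnc Sig S) = prevEnc Sig (S.drop 1) := by
  unfold ptail
  rw [length_prevEnc]
  conv_rhs => rw [prevEnc]
  rw [List.length_drop]
  apply List.map_congr_left
  intro q hq
  rw [List.mem_range] at hq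
  have hq1 : q + 1 < S.length := by omega
  obtain ⟨c, hc⟩ : ∃ c, S[q+1]? = some c := ⟨S[q+1], List.getElem?_eq_getElem hq1⟩
  have hget : (S.drop 1)[q]? = some c := by
    rw [List.getElem?_drop]; rw [show 1 + q = q + 1 from by omega]; exact hc
  have hL : (prevEnc Sig S)[q+1]? = some (prevEncAt Sig S (q+1)) := by
    rw [prevEnc, List.getElem?_map, List.getElem?_range (by omega : q+1 < S.length)]
    rfl
  unfold ptailF
  rw [hL, prevEncAt_eq Sig S (q+1) c hc, prevEncAt_eq Sig (S.drop 1) q c hget]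
  by_cases hcs : c ∈ Sig
  · simp [hcs]
  · simp only [hcs, if_false]
    by_cases hA : ∃ j0, 1 ≤ j0 ∧ j0 ≤ q ∧ S[j0]? = some c
    · obtain ⟨j0, hj1, hj2, hj3⟩ := hA
      have hb1 : ((List.range (q+1)).any (fun j => decide (S[j]? = some c))) = true := by
        simp only [List.any_eq_true, List.mem_range, decide_eq_true_eq]
        exact ⟨j0, by omega, hj3⟩
      have hb2 : ((List.range q).any (fun j => decide ((S.drop 1)[j]? = some c))) = true := by
        simp only [List.any_eq_true, List.mem_range, decide_eq_true_eq]
        refine ⟨j0 - 1, by omega, ?_⟩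
        rw [List.getElem?_drop, show 1 + (j0 - 1) = j0 from by omega]
        exact hj3
      rw [Nat.add_sub_cancel]
      set J := Nat.findGreatest (fun j => S[j]? = some c) q with hJ
      have hJge : 1 ≤ J := le_trans hj1 (Nat.le_findGreatest hj2 hj3)
      have hJle : J ≤ q := Nat.findGreatest_le q
      have hPJ : S[J]? = some c := by
        rw [hJ]
        exact Nat.findGreatest_spec (P := fun j => S[j]? = some c) hj2 hj3
      have hG2 : Nat.findGreatest (fun j => (S.drop 1)[j]? = some c) (q-1) = J - 1 := by
        rw [Nat.findGreatest_eq_iff]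
        refine ⟨by omega, fun _ => ?_, fun n hn hn' => ?_⟩
        · rw [List.getElem?_drop, show 1 + (J-1) = J from by omega]; exact hPJ
        · rw [List.getElem?_drop]
          exact fun hPn => Nat.findGreatest_is_greatest (P := fun j => S[j]? = some c)
            (n := q) (k := 1 + n) (by omega) (by omega) hPn
      rw [hb1, hb2, hG2]
      simp only [if_true]
      have hne : ¬ (q + 1 - J = q + 1) := by omega
      rw [if_neg hne]
      congr 1
      omega
    · by_cases hc0 : S[0]? = some c
      · have hb1 : ((List.range (q+1)).any (fun j => decide (S[j]? = some c))) = true := by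
          simp only [List.any_eq_true, List.mem_range, decide_eq_true_eq]
          exact ⟨0, by omega, hc0⟩
        have hb2 : ((List.range q).any (fun j => decide ((S.drop 1)[j]? = some c))) = false := by
          simp only [List.any_eq_false, List.mem_range, decide_eq_true_eq]
          intro j hj
          rw [List.getElem?_drop]
          exact fun hje => hA ⟨1 + j, by omega, by omega, hje⟩
        have hG : Nat.findGreatest (fun j => S[j]? = some c) (q+1-1) = 0 := by
          rw [Nat.add_sub_cancel, Nat.findGreatest_eq_iff]
          exact ⟨Nat.zero_le _, fun h => absurd rfl h,
            fun n hn hn' hPn => hA ⟨n, by omega, by omega, hPn⟩⟩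
        rw [hb1, hb2, hG]
        simp
      · have hb1 : ((List.range (q+1)).any (fun j => decide (S[j]? = some c))) = false := by
          simp only [List.any_eq_false, List.mem_range, decide_eq_true_eq]
          intro j hj hje
          rcases Nat.eq_zero_or_pos j with rfl | hjp
          · exact hc0 hje
          · exact hA ⟨j, hjp, by omega, hje⟩
        have hb2 : ((List.range q).any (fun j => decide ((S.drop 1)[j]? = some c))) = false := by
          simp only [List.any_eq_false, List.mem_range, decide_eq_true_eq]
          intro j hj
          rw [List.getElem?_drop]
          exact fun hje => hA ⟨1 + j, by omega, by omega, hje⟩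
        rw [hb1, hb2]
        simp

def shtStep {β : Type} [DecidableEq β] (N : Finset (List β)) (S : List β) : Finset (List β) :=
  insert (S.take (insLen N S)) N

lemma insLen_le {β : Type} [DecidableEq β] (N : Finset (List β)) (S : List β) :
    insLen N S ≤ S.length := by
  unfold insLen
  cases h : ((List.range (S.length + 1)).filter (fun m => decide (S.take m ∉ N))).head? with
  | none => simp
  | some d =>
    simp only [Option.getD_some]
    have hd : d ∈ (List.range (S.length + 1)).filter (fun m => decide (S.take m ∉ N)) :=
      List.mem_of_mem_head? (by rw [h]; rfl)
    have := List.mem_range.mp (List.mem_of_mem_filter hd)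
    omega

lemma take_mem_of_lt_insLen {β : Type} [DecidableEq β] {N : Finset (List β)} {S : List β}
    {m : ℕ} (hm : m < insLen N S) : S.take m ∈ N := by
  have hml : m ≤ S.length := le_trans (le_of_lt hm) (insLen_le N S)
  by_contra hnot
  have hmem : m ∈ (List.range (S.length + 1)).filter (fun m => decide (S.take m ∉ N)) := by
    rw [List.mem_filter, List.mem_range]
    exact ⟨by omega, by simpa using hnot⟩
  unfold insLen at hm
  cases hh : ((List.range (S.length + 1)).filter (fun m => decide (S.take m ∉ N))).head? with
  | none =>
    rw [List.head?_eq_none_iff] at hh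
    rw [hh] at hmem
    exact absurd hmem (List.not_mem_nil (a := m))
  | some d =>
    rw [hh] at hm
    simp only [Option.getD_some] at hm
    have hdle : d ≤ m := by
      cases hfl : (List.range (S.length + 1)).filter (fun m => decide (S.take m ∉ N)) with
      | nil => rw [hfl] at hh; cases hh
      | cons a t =>
        rw [hfl] at hh hmem
        have ha : a = d := by simpa using hh
        have hpw := (List.pairwise_lt_range (n := S.length + 1)).filter
          (fun m => decide (S.take m ∉ N))
        rw [hfl, List.pairwise_cons] at hpw
        rcases List.mem_cons.mp hmem with rfl | hmt
        · omega
        · have := hpw.1 m hmt; omega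
    omega

lemma insLen_spec {β : Type} [DecidableEq β] (N : Finset (List β)) (S : List β) :
    S.take (insLen N S) ∉ N ∨ (insLen N S = S.length ∧ S ∈ N) := by
  unfold insLen
  cases hh : ((List.range (S.length + 1)).filter (fun m => decide (S.take m ∉ N))).head? with
  | none =>
    right
    rw [List.head?_eq_none_iff] at hh
    refine ⟨by simp, ?_⟩
    have h2 := List.filter_eq_nil_iff.mp hh S.length (by rw [List.mem_range]; omega)
    simp only [decide_not, Bool.not_eq_true', decide_eq_false_iff_not, not_not] at h2
    rwa [List.take_length] at h2
  | some d =>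
    left
    have hd : d ∈ (List.range (S.length + 1)).filter (fun m => decide (S.take m ∉ N)) :=
      List.mem_of_mem_head? (by rw [hh]; rfl)
    rw [List.mem_filter] at hd
    simp only [Option.getD_some]
    simpa using hd.2

def InvP {β : Type} [DecidableEq β] (pt : List β → List β) (N : Finset (List β)) : Prop :=
  [] ∈ N ∧ (∀ w ∈ N, ∀ m, w.take m ∈ N) ∧ ∀ w ∈ N, pt w ∈ N

lemma stepInv {β : Type} [DecidableEq β] (pt : List β → List β)
    (hpt_take : ∀ w m, pt (w.take m) = (pt w).take (m-1))
    (N'' : Finset (List β)) (hpt'' : ∀ w ∈ N'', pt w ∈ N'')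
    (Sp S : List β) (hS : pt S = Sp) (hlen : S.length ≤ Sp.length + 1)
    (hInv : InvP pt (shtStep N'' Sp)) :
    InvP pt (shtStep (shtStep N'' Sp) S) := by
  obtain ⟨hnil, hpre, hpt⟩ := hInv
  refine ⟨Finset.mem_insert_of_mem hnil, ?_, ?_⟩
  · intro w hw m
    rcases Finset.mem_insert.mp hw with rfl | hw
    · rw [List.take_take]
      rcases le_or_gt (insLen (shtStep N'' Sp) S) m with hmd | hmd
      · rw [min_eq_right hmd]; exact Finset.mem_insert_self _ _
      · rw [min_eq_left hmd.le]
        exact Finset.mem_insert_of_mem (take_mem_of_lt_insLen hmd)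
    · exact Finset.mem_insert_of_mem (hpre w hw m)
  · intro w hw
    rcases Finset.mem_insert.mp hw with rfl | hw
    · apply Finset.mem_insert_of_mem
      rw [hpt_take, hS]
      set d := insLen (shtStep N'' Sp) S with hd
      set dp := insLen N'' Sp with hdp
      rcases le_or_gt d (dp + 1) with hcase | hcase
      · have hnode : Sp.take dp ∈ shtStep N'' Sp := Finset.mem_insert_self _ _
        have h := hpre _ hnode (d-1)
        rwa [List.take_take, min_eq_left (by omega)] at h
      · exfalso
        have hdle : d ≤ S.length := insLen_le _ S
        rcases insLen_spec N'' Sp with hnot | ⟨hlen', hmem⟩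
        · have h1 : S.take (dp+1) ∈ shtStep N'' Sp := take_mem_of_lt_insLen (by omega)
          have h2 : S.take (dp+1) ∈ N'' := by
            rcases Finset.mem_insert.mp h1 with heq | h2
            · exfalso
              rw [show insLen N'' Sp = dp from hdp.symm] at heq
              have l1 : (S.take (dp+1)).length = dp+1 := by rw [List.length_take]; omega
              have l2 : (Sp.take dp).length ≤ dp := by rw [List.length_take]; omega
              rw [heq] at l1
              omega
            · exact h2
          have h3 := hpt'' _ h2
          rw [hpt_take, hS, Nat.add_sub_cancel] at h3
          exact hnot h3
        · omega
    · exact Finset.mem_insert_of_mem (hpt w hw)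

lemma foldInv {β : Type} [DecidableEq β] (pt : List β → List β)
    (hpt_take : ∀ w m, pt (w.take m) = (pt w).take (m-1)) :
    ∀ (L : List (List β)) (N'' : Finset (List β)) (Sp : List β),
      (∀ w ∈ N'', pt w ∈ N'') → InvP pt (shtStep N'' Sp) →
      List.Chain (fun a b => pt b = a ∧ b.length ≤ a.length + 1) Sp L →
      InvP pt (L.foldl shtStep (shtStep N'' Sp))
  | [], _, _, _, hInv, _ => hInv
  | S :: L', N'', Sp, hpt'', hInv, hchain => by
      simp only [List.Chain] at hchain
      rw [List.chain_cons] at hchain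
      obtain ⟨⟨h1, h2⟩, hchain'⟩ := hchain
      rw [List.foldl_cons]
      exact foldInv pt hpt_take L' (shtStep N'' Sp) S hInv.2.2
        (stepInv pt hpt_take N'' hpt'' Sp S h1 h2 hInv) hchain'

lemma ptail_nil : ptail ([] : List (α ⊕ ℕ)) = [] := by simp [ptail]

lemma chain_iff_get_aux {β : Type} {R : β → β → Prop} {a : β} {l : List β} :
    List.Chain R a l ↔ (∀ h : 0 < l.length, R a (l.get ⟨0, h⟩)) ∧
      ∀ (i : ℕ) (h : i < l.length - 1), R (l.get ⟨i, by omega⟩) (l.get ⟨i + 1, by omega⟩) := by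
  simp only [List.Chain, List.isChain_iff_getElem, List.length_cons, List.get_eq_getElem]
  constructor
  · intro H
    exact ⟨fun h => H 0 (by omega), fun i hi => H (i + 1) (by omega)⟩
  · rintro ⟨H0, H⟩ i hi
    cases i with
    | zero => exact H0 (by omega)
    | succ i => exact H i (by omega)

lemma pphInv (Sig : Set α) [DecidablePred (· ∈ Sig)] (T : List α) :
    InvP ptail (pphNodes Sig T) := by
  have hstep : pphNodes Sig T
      = (List.map (fun k => prevEnc Sig (T.drop (T.length - 1 - k)))
          (List.range T.length)).foldl shtStep (shtStep ∅ []) := rfl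
  rw [hstep]
  have hsing : shtStep (∅ : Finset (List (α ⊕ ℕ))) [] = {[]} := by
    have h0 : insLen (∅ : Finset (List (α ⊕ ℕ))) [] = 0 := by
      have := insLen_le (∅ : Finset (List (α ⊕ ℕ))) []
      simpa using this
    rw [shtStep, h0]
    rfl
  apply foldInv ptail ptail_take
  · intro w hw
    exact absurd hw (Finset.notMem_empty w)
  · rw [hsing]
    refine ⟨Finset.mem_singleton_self _, ?_, ?_⟩
    · intro w hw m
      rw [Finset.mem_singleton] at hw
      subst hw
      simpa using Finset.mem_singleton_self ([] : List (α ⊕ ℕ))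
    · intro w hw
      rw [Finset.mem_singleton] at hw
      subst hw
      rw [ptail_nil]
      exact Finset.mem_singleton_self _
  · rw [chain_iff_get_aux]
    constructor
    · intro h
      simp only [List.get_eq_getElem, List.getElem_map, List.getElem_range]
      refine ⟨?_, ?_⟩
      · rw [ptail_prevEnc, List.drop_drop,
          show T.length - 1 - 0 + 1 = T.length from by
            rw [List.length_map, List.length_range] at h; omega,
          List.drop_length]
        simp [prevEnc]
      · rw [length_prevEnc, List.length_drop]
        omega
    · intro k hk
      rw [List.length_map, List.length_range] at hk
      simp only [List.get_eq_getElem, List.getElem_map, List.getElem_range]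
      refine ⟨?_, ?_⟩
      · rw [ptail_prevEnc, List.drop_drop,
          show T.length - 1 - (k+1) + 1 = T.length - 1 - k from by omega]
      · rw [length_prevEnc, length_prevEnc, List.length_drop, List.length_drop]
        omega

theorem stmt13 (Sig : Set α) [DecidablePred (· ∈ Sig)] (T : List α)
    (i j : ℕ) (h1 : 1 ≤ i) (h2 : i ≤ j) (h3 : j ≤ T.length)
    (h : prevEnc Sig ((T.drop (i - 1)).take (j - i + 1)) ∈ pphNodes Sig T) :
    ∀ i' j', i ≤ i' → i' ≤ j' → j' ≤ j →
      prevEnc Sig ((T.drop (i' - 1)).take (j' - i' + 1)) ∈ pphNodes Sig T := by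
  intro i' j' hi' hij' hj'
  obtain ⟨hnil, hpre, hpt⟩ := pphInv Sig T
  rw [prevEnc_take] at h
  have key : ∀ t, (prevEnc Sig (T.drop (i-1+t))).take (j-i+1-t) ∈ pphNodes Sig T := by
    intro t
    induction t with
    | zero => simpa using h
    | succ t ih =>
      have hstep := hpt _ ih
      rw [ptail_take, ptail_prevEnc, List.drop_drop] at hstep
      have e1 : i-1+t+1 = i-1+(t+1) := by omega
      have e2 : j-i+1-t-1 = j-i+1-(t+1) := by omega
      rwa [e1, e2] at hstep
  have hk := key (i' - i)
  have e3 : i-1+(i'-i) = i'-1 := by omega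
  have e4 : j-i+1-(i'-i) = j-i'+1 := by omega
  rw [e3, e4] at hk
  have hfin := hpre _ hk (j'-i'+1)
  rw [List.take_take, min_eq_left (by omega)] at hfin
  rwa [prevEnc_take]
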